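/- Let {X_i} be a cofiltered inverse system of nonempty connected spectral spaces with quasi-compact transition maps. Then the inverse limit X = lim X_i is nonempty and connected. -/

import Mathlib

open CategoryTheory

universe u

/-- A topological space is *spectral* if it is quasi-compact, `T0`, sober, quasi-separated
(quasi-compact opens are closed under finite intersections) and has a basis of quasi-compact
open subsets. -/
def IsSpectralTop (α : Type u) [TopologicalSpace α] : Prop :=
  CompactSpace α ∧ T0Space α ∧ QuasiSober α ∧ QuasiSeparatedSpace α ∧
    ∀ (x : α) (U : Set α), IsOpen U → x ∈ U →
      ∃ V : Set α, IsOpen V ∧ IsCompact V ∧ x ∈ V ∧ V ⊆ U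

/-- A continuous map is *quasi-compact* if preimages of quasi-compact opens are
quasi-compact. -/
def IsQuasiCompactMap {α β : Type*} [TopologicalSpace α] [TopologicalSpace β]
    (f : α → β) : Prop :=
  ∀ U : Set β, IsOpen U → IsCompact U → IsCompact (f ⁻¹' U)

section PatchAux

open Set

section Patch

variable {X : Type u} [TopologicalSpace X]

/-- membership indicator on quasi-compact opens -/
noncomputable def phi (x : X) : Set X → Bool := fun U =>
  @decide (x ∈ U ∧ IsOpen U ∧ IsCompact U) (Classical.propDecidable _)

lemma phi_eq_true_iff {x : X} {U : Set X} :
    phi x U = true ↔ (x ∈ U ∧ IsOpen U ∧ IsCompact U) := by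
  simp [phi]

lemma phi_qc {x : X} {U : Set X} (hU : IsOpen U) (hUc : IsCompact U) :
    phi x U = true ↔ x ∈ U := by
  simp [phi_eq_true_iff, hU, hUc]

lemma phi_not_qc {x : X} {U : Set X} (h : ¬ (IsOpen U ∧ IsCompact U)) :
    phi x U = false := by
  rw [Bool.eq_false_iff]
  intro hc
  exact h (phi_eq_true_iff.mp hc).2

/-- The conditions cutting out the image of `phi` inside `Set X → Bool`. -/
def patchSet (X : Type u) [TopologicalSpace X] : Set (Set X → Bool) :=
  {b | b Set.univ = true ∧ b ∅ = false ∧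
    (∀ U V : Set X, IsOpen U → IsCompact U → IsOpen V → IsCompact V →
      b (U ∩ V) = (b U && b V)) ∧
    (∀ U V : Set X, IsOpen U → IsCompact U → IsOpen V → IsCompact V →
      b (U ∪ V) = (b U || b V)) ∧
    (∀ U : Set X, ¬ (IsOpen U ∧ IsCompact U) → b U = false)}

lemma phi_mem_patchSet [CompactSpace X] [QuasiSeparatedSpace X] (x : X) :
    phi x ∈ patchSet X := by
  refine ⟨(phi_qc isOpen_univ isCompact_univ).mpr (mem_univ x),
    by rw [Bool.eq_false_iff]; intro hc; exact (phi_eq_true_iff.mp hc).1, ?_, ?_, ?_⟩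
  · intro U V hU hUc hV hVc
    rw [Bool.eq_iff_iff]
    simp only [Bool.and_eq_true]
    rw [phi_qc (hU.inter hV) (QuasiSeparatedSpace.inter_isCompact U V hU hUc hV hVc),
      phi_qc hU hUc, phi_qc hV hVc]
    exact mem_inter_iff x U V
  · intro U V hU hUc hV hVc
    rw [Bool.eq_iff_iff]
    simp only [Bool.or_eq_true]
    rw [phi_qc (hU.union hV) (hUc.union hVc), phi_qc hU hUc, phi_qc hV hVc]
    exact mem_union x U V
  · intro U hU; exact phi_not_qc hU

/-- injectivity of phi -/
lemma phi_injective [T0Space X]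
    (hbasis : ∀ (x : X) (U : Set X), IsOpen U → x ∈ U →
      ∃ V : Set X, IsOpen V ∧ IsCompact V ∧ x ∈ V ∧ V ⊆ U) :
    Function.Injective (phi (X := X)) := by
  intro x y h
  have key : ∀ x y : X, phi x = phi y → ∀ U : Set X, IsOpen U → x ∈ U → y ∈ U := by
    intro x y h U hU hx
    obtain ⟨V, hV, hVc, hxV, hVU⟩ := hbasis x U hU hx
    have : phi y V = true := by rw [← h]; exact (phi_qc hV hVc).mpr hxV
    exact hVU ((phi_qc hV hVc).mp this)
  refine Inseparable.eq ?_
  rw [inseparable_iff_forall_isOpen]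
  intro U hU
  exact ⟨key x y h U hU, key y x h.symm U hU⟩

section Surj

variable [CompactSpace X] [QuasiSober X] [QuasiSeparatedSpace X]
variable {b : Set X → Bool}

private lemma mono (hb : b ∈ patchSet X) {U V : Set X} (hU : IsOpen U) (hUc : IsCompact U)
    (hV : IsOpen V) (hVc : IsCompact V) (hUV : U ⊆ V) (h : b U = true) : b V = true := by
  have := hb.2.2.1 U V hU hUc hV hVc
  rw [inter_eq_self_of_subset_left hUV, h] at this
  exact (Bool.and_eq_true _ _).mp this.symm |>.2

/-- the union of all qc opens on which `b` is false -/
private def badW (b : Set X → Bool) : Set X :=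
  ⋃₀ {U : Set X | IsOpen U ∧ IsCompact U ∧ b U = false}

private lemma mem_badW {U : Set X} {x : X} (hU : IsOpen U) (hUc : IsCompact U)
    (hbU : b U = false) (hx : x ∈ U) : x ∈ badW b :=
  ⟨U, ⟨hU, hUc, hbU⟩, hx⟩

private lemma badW_open : IsOpen (badW b) :=
  isOpen_sUnion fun _ h => h.1

/-- a qc open on which `b` is true is not contained in `badW b` -/
private lemma not_subset_badW (hb : b ∈ patchSet X) {U : Set X} (hU : IsOpen U)
    (hUc : IsCompact U) (h : b U = true) : ¬ U ⊆ badW b := by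
  intro hsub
  -- finite subcover
  obtain ⟨t, ht⟩ := hUc.elim_finite_subcover
    (fun V : {V : Set X // IsOpen V ∧ IsCompact V ∧ b V = false} => (V : Set X))
    (fun V => V.2.1) (by
      intro x hx; obtain ⟨V, hV, hxV⟩ := hsub hx; exact mem_iUnion.mpr ⟨⟨V, hV⟩, hxV⟩)
  -- the union over t is qc open with b = false
  have key : ∀ t : Finset {V : Set X // IsOpen V ∧ IsCompact V ∧ b V = false},
      IsOpen (⋃ V ∈ t, (V : Set X)) ∧ IsCompact (⋃ V ∈ t, (V : Set X)) ∧
        b (⋃ V ∈ t, (V : Set X)) = false := by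
    classical
    intro t
    induction t using Finset.induction_on with
    | empty =>
      simp only [Finset.notMem_empty, iUnion_of_empty, iUnion_empty]
      exact ⟨isOpen_empty, isCompact_empty, hb.2.1⟩
    | @insert V s hVs ih =>
      rw [Finset.set_biUnion_insert]
      refine ⟨V.2.1.union ih.1, V.2.2.1.union ih.2.1, ?_⟩
      rw [hb.2.2.2.1 V _ V.2.1 V.2.2.1 ih.1 ih.2.1, V.2.2.2, ih.2.2]
      rfl
  have := mono hb hU hUc (key t).1 (key t).2.1 ht h
  rw [(key t).2.2] at this
  exact Bool.false_ne_true this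

private lemma badW_compl_nonempty (hb : b ∈ patchSet X) : (badW b)ᶜ.Nonempty := by
  rw [nonempty_compl]
  intro h
  exact not_subset_badW hb isOpen_univ isCompact_univ hb.1 (h ▸ subset_rfl)

private lemma badW_compl_irreducible
    (hbasis : ∀ (x : X) (U : Set X), IsOpen U → x ∈ U →
      ∃ V : Set X, IsOpen V ∧ IsCompact V ∧ x ∈ V ∧ V ⊆ U)
    (hb : b ∈ patchSet X) : IsIrreducible ((badW b)ᶜ) := by
  refine ⟨badW_compl_nonempty hb, ?_⟩
  rintro A B hA hB ⟨a, haZ, haA⟩ ⟨c, hcZ, hcB⟩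
  obtain ⟨Ua, hUa, hUac, haUa, hUaA⟩ := hbasis a A hA haA
  obtain ⟨Uc, hUc, hUcc, hcUc, hUcB⟩ := hbasis c B hB hcB
  have hba : b Ua = true := by
    rcases Bool.eq_false_or_eq_true (b Ua) with h | h
    · exact h
    · exact (haZ (mem_badW hUa hUac h haUa)).elim
  have hbc : b Uc = true := by
    rcases Bool.eq_false_or_eq_true (b Uc) with h | h
    · exact h
    · exact (hcZ (mem_badW hUc hUcc h hcUc)).elim
  have hint : b (Ua ∩ Uc) = true := by
    rw [hb.2.2.1 Ua Uc hUa hUac hUc hUcc, hba, hbc]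
    rfl
  have := not_subset_badW hb (hUa.inter hUc)
    (QuasiSeparatedSpace.inter_isCompact Ua Uc hUa hUac hUc hUcc) hint
  rw [not_subset] at this
  obtain ⟨z, hz, hznW⟩ := this
  exact ⟨z, hznW, hUaA hz.1, hUcB hz.2⟩

/-- surjectivity of `phi` onto `patchSet X` -/
lemma phi_surjective
    (hbasis : ∀ (x : X) (U : Set X), IsOpen U → x ∈ U →
      ∃ V : Set X, IsOpen V ∧ IsCompact V ∧ x ∈ V ∧ V ⊆ U)
    (hb : b ∈ patchSet X) : ∃ x : X, phi x = b := by
  obtain ⟨x, hx⟩ := QuasiSober.sober (badW_compl_irreducible hbasis hb)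
    (badW_open.isClosed_compl)
  refine ⟨x, funext fun U => ?_⟩
  by_cases hqc : IsOpen U ∧ IsCompact U
  · rcases Bool.eq_false_or_eq_true (b U) with h | h
    · rw [h]
      rw [phi_qc hqc.1 hqc.2]
      by_contra hxU
      -- closure {x} = Z ⊆ Uᶜ, so U ⊆ badW b
      have hZU : (badW b)ᶜ ⊆ Uᶜ := by
        rw [← hx]
        exact closure_minimal (singleton_subset_iff.mpr hxU) (hqc.1.isClosed_compl)
      have : U ⊆ badW b := by
        intro u hu
        by_contra hc
        exact hZU hc hu
      exact not_subset_badW hb hqc.1 hqc.2 h this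
    · rw [h, Bool.eq_false_iff]
      intro hc
      have hxU := (phi_qc hqc.1 hqc.2).mp hc
      have : x ∈ badW b := mem_badW hqc.1 hqc.2 h hxU
      have hxZ : x ∈ (badW b)ᶜ := hx.mem
      exact hxZ this
  · rw [phi_not_qc hqc, hb.2.2.2.2 U hqc]

end Surj

end Patch

/-- transfer of `phi` along a quasi-compact continuous map -/
lemma phi_map {X Y : Type u} [TopologicalSpace X] [TopologicalSpace Y] {g : X → Y}
    (hgc : Continuous g) (hgq : ∀ U : Set Y, IsOpen U → IsCompact U → IsCompact (g ⁻¹' U))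
    (x : X) {U : Set Y} (hU : IsOpen U) (hUc : IsCompact U) :
    phi (g x) U = phi x (g ⁻¹' U) := by
  rw [Bool.eq_iff_iff, phi_qc hU hUc, phi_qc (hU.preimage hgc) (hgq U hU hUc)]
  exact Iff.rfl

lemma isClosed_imp' {α : Type*} [TopologicalSpace α] {p : Prop} {s : Set α}
    (h : p → IsClosed s) : IsClosed {x | p → x ∈ s} := by
  by_cases hp : p
  · simpa [hp] using h hp
  · simp [hp]

lemma continuous_apply_and {X : Type u} (U V : Set X) :
    Continuous (fun b : Set X → Bool => (b U && b V)) := by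
  have h : Continuous (fun b : Set X → Bool => (b U, b V)) :=
    (continuous_apply U).prodMk (continuous_apply V)
  exact (continuous_of_discreteTopology (f := fun p : Bool × Bool => p.1 && p.2)).comp h

lemma continuous_apply_or {X : Type u} (U V : Set X) :
    Continuous (fun b : Set X → Bool => (b U || b V)) := by
  have h : Continuous (fun b : Set X → Bool => (b U, b V)) :=
    (continuous_apply U).prodMk (continuous_apply V)
  exact (continuous_of_discreteTopology (f := fun p : Bool × Bool => p.1 || p.2)).comp h

lemma patchSet_closed (X : Type u) [TopologicalSpace X] : IsClosed (patchSet X) := by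
  have c1 : IsClosed {b : Set X → Bool | b Set.univ = true} :=
    isClosed_eq (continuous_apply _) continuous_const
  have c2 : IsClosed {b : Set X → Bool | b ∅ = false} :=
    isClosed_eq (continuous_apply _) continuous_const
  have c3 : IsClosed {b : Set X → Bool | ∀ U V : Set X, IsOpen U → IsCompact U → IsOpen V →
      IsCompact V → b (U ∩ V) = (b U && b V)} := by
    rw [Set.setOf_forall]
    refine isClosed_iInter fun U => ?_
    rw [Set.setOf_forall]
    refine isClosed_iInter fun V => ?_
    refine isClosed_imp' fun _ => isClosed_imp' fun _ => isClosed_imp' fun _ =>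
      isClosed_imp' fun _ => ?_
    exact isClosed_eq (continuous_apply _) (continuous_apply_and U V)
  have c4 : IsClosed {b : Set X → Bool | ∀ U V : Set X, IsOpen U → IsCompact U → IsOpen V →
      IsCompact V → b (U ∪ V) = (b U || b V)} := by
    rw [Set.setOf_forall]
    refine isClosed_iInter fun U => ?_
    rw [Set.setOf_forall]
    refine isClosed_iInter fun V => ?_
    refine isClosed_imp' fun _ => isClosed_imp' fun _ => isClosed_imp' fun _ =>
      isClosed_imp' fun _ => ?_
    exact isClosed_eq (continuous_apply _) (continuous_apply_or U V)
  have c5 : IsClosed {b : Set X → Bool | ∀ U : Set X, ¬ (IsOpen U ∧ IsCompact U) →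
      b U = false} := by
    rw [Set.setOf_forall]
    refine isClosed_iInter fun U => ?_
    exact isClosed_imp' fun _ => isClosed_eq (continuous_apply _) continuous_const
  exact c1.inter (c2.inter (c3.inter (c4.inter c5)))

end PatchAux

variable {J : Type u} [SmallCategory J] [IsCofiltered J]

/-- The inverse limit of an inverse system of topological spaces, as a subspace of the
product. -/
def InvLimit (F : J ⥤ TopCat.{u}) : Type u :=
  {x : ∀ j : J, F.obj j // ∀ {i j : J} (f : i ⟶ j), (F.map f) (x i) = x j}

instance (F : J ⥤ TopCat.{u}) : TopologicalSpace (InvLimit F) := by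
  unfold InvLimit; infer_instance

section Limit

variable (F : J ⥤ TopCat.{u})

/-- ambient product of boolean functions -/
abbrev BigP (F : J ⥤ TopCat.{u}) : Type u := ∀ j : J, Set (F.obj j) → Bool

/-- the patch-limit set -/
def bigT (F : J ⥤ TopCat.{u}) : Set (BigP F) :=
  {b | (∀ j : J, b j ∈ patchSet (F.obj j)) ∧
    ∀ (i j : J) (f : i ⟶ j) (U : Set (F.obj j)), IsOpen U → IsCompact U →
      b j U = b i ((F.map f) ⁻¹' U)}

lemma bigT_closed : IsClosed (bigT F) := by
  have h1 : IsClosed {b : BigP F | ∀ j : J, b j ∈ patchSet (F.obj j)} := by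
    rw [Set.setOf_forall]
    exact isClosed_iInter fun j => (patchSet_closed _).preimage (continuous_apply j)
  have h2 : IsClosed {b : BigP F | ∀ (i j : J) (f : i ⟶ j) (U : Set (F.obj j)),
      IsOpen U → IsCompact U → b j U = b i ((F.map f) ⁻¹' U)} := by
    rw [Set.setOf_forall]
    refine isClosed_iInter fun i => ?_
    rw [Set.setOf_forall]
    refine isClosed_iInter fun j => ?_
    rw [Set.setOf_forall]
    refine isClosed_iInter fun f => ?_
    rw [Set.setOf_forall]
    refine isClosed_iInter fun U => ?_
    refine isClosed_imp' fun _ => isClosed_imp' fun _ => ?_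
    exact isClosed_eq ((continuous_apply U).comp (continuous_apply j))
      ((continuous_apply _).comp (continuous_apply i))
  exact h1.inter h2


def FDA (G : Finset J) := Σ' (X Y : J) (_ : X ∈ G) (_ : Y ∈ G), X ⟶ Y

def FD (J : Type u) [SmallCategory J] := Σ G : Finset J, Finset (FDA G)

/-- finite approximations to the patch-limit set, with a constraint at `k` -/
def patchSections (k : J) (Ehat : Set (Set (F.obj k) → Bool)) (D : FD J) :
    Set (BigP F) :=
  {b | (∀ j : J, b j ∈ patchSet (F.obj j)) ∧ b k ∈ Ehat ∧
    ∀ f : FDA D.1, f ∈ D.2 → ∀ U : Set (F.obj f.2.1), IsOpen U → IsCompact U →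
      b f.2.1 U = b f.1 ((F.map f.2.2.2.2) ⁻¹' U)}

lemma patchSections_directed (k : J) (Ehat : Set (Set (F.obj k) → Bool)) :
    Directed (· ⊇ ·) (patchSections F k Ehat) := by
  classical
  intro A B
  let ιA : FDA A.1 → FDA (A.1 ⊔ B.1) := fun f =>
    ⟨f.1, f.2.1, Finset.mem_union_left _ f.2.2.1, Finset.mem_union_left _ f.2.2.2.1, f.2.2.2.2⟩
  let ιB : FDA B.1 → FDA (A.1 ⊔ B.1) := fun f =>
    ⟨f.1, f.2.1, Finset.mem_union_right _ f.2.2.1, Finset.mem_union_right _ f.2.2.2.1, f.2.2.2.2⟩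
  refine ⟨⟨A.1 ⊔ B.1, A.2.image ιA ⊔ B.2.image ιB⟩, ?_, ?_⟩
  · rintro u ⟨h1, h2, h3⟩
    refine ⟨h1, h2, fun f hf => ?_⟩
    have : ιA f ∈ A.2.image ιA ⊔ B.2.image ιB := by
      apply Finset.mem_union_left
      rw [Finset.mem_image]
      exact ⟨f, hf, rfl⟩
    exact h3 (ιA f) this
  · rintro u ⟨h1, h2, h3⟩
    refine ⟨h1, h2, fun f hf => ?_⟩
    have : ιB f ∈ A.2.image ιA ⊔ B.2.image ιB := by
      apply Finset.mem_union_right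
      rw [Finset.mem_image]
      exact ⟨f, hf, rfl⟩
    exact h3 (ιB f) this

lemma patchSections_closed (k : J) (Ehat : Set (Set (F.obj k) → Bool))
    (hE : IsClosed Ehat) (D : FD J) : IsClosed (patchSections F k Ehat D) := by
  have h1 : IsClosed {b : BigP F | ∀ j : J, b j ∈ patchSet (F.obj j)} := by
    rw [Set.setOf_forall]
    exact isClosed_iInter fun j => (patchSet_closed _).preimage (continuous_apply j)
  have h2 : IsClosed {b : BigP F | b k ∈ Ehat} := hE.preimage (continuous_apply k)
  have h3 : IsClosed {b : BigP F | ∀ f : FDA D.1, f ∈ D.2 →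
      ∀ U : Set (F.obj f.2.1), IsOpen U → IsCompact U →
        b f.2.1 U = b f.1 ((F.map f.2.2.2.2) ⁻¹' U)} := by
    rw [Set.setOf_forall]
    refine isClosed_iInter fun f => ?_
    refine isClosed_imp' fun _ => ?_
    show IsClosed {b : BigP F | ∀ U : Set (F.obj f.2.1), IsOpen U → IsCompact U →
      b f.2.1 U = b f.1 ((F.map f.2.2.2.2) ⁻¹' U)}
    rw [Set.setOf_forall]
    refine isClosed_iInter fun U => ?_
    refine isClosed_imp' fun _ => isClosed_imp' fun _ => ?_
    exact isClosed_eq ((continuous_apply U).comp (continuous_apply f.2.1))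
      ((continuous_apply _).comp (continuous_apply f.1))
  exact h1.inter (h2.inter h3)

lemma patchSections_nonempty
    (hspec : ∀ j : J, IsSpectralTop (F.obj j))
    (hne : ∀ j : J, Nonempty (F.obj j))
    (hqc : ∀ {i j : J} (f : i ⟶ j), IsQuasiCompactMap (F.map f))
    (k : J) (Ehat : Set (Set (F.obj k) → Bool)) (E : Set (F.obj k))
    (hEiff : ∀ x : F.obj k, x ∈ E ↔ phi x ∈ Ehat)
    (hstage : ∀ (j : J) (f : j ⟶ k), ((F.map f) ⁻¹' E).Nonempty)
    (D : FD J) : (patchSections F k Ehat D).Nonempty := by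
  classical
  -- enlarge the finite set of objects to contain `k`
  let G : Finset J := insert k D.1
  let ι : FDA D.1 → FDA G := fun f =>
    ⟨f.1, f.2.1, Finset.mem_insert_of_mem f.2.2.1, Finset.mem_insert_of_mem f.2.2.2.1,
      f.2.2.2.2⟩
  let H : Finset (FDA G) := D.2.image ι
  let m : J := IsCofiltered.inf G H
  have hkG : k ∈ G := Finset.mem_insert_self k D.1
  obtain ⟨z, hz⟩ := hstage m (IsCofiltered.infTo G H hkG)
  refine ⟨fun j : J => if h : j ∈ G then phi ((F.map (IsCofiltered.infTo G H h)) z)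
      else phi ((hne j).some), ?_, ?_, ?_⟩
  · intro j
    obtain ⟨i1, i2, i3, i4, i5⟩ := hspec j
    haveI := i1; haveI := i4
    by_cases h : j ∈ G
    · simp only [dif_pos h]; exact phi_mem_patchSet _
    · simp only [dif_neg h]; exact phi_mem_patchSet _
  · simp only [dif_pos hkG]
    exact (hEiff _).mp hz
  · rintro ⟨fi, fj, hfi, hfj, f⟩ hf U hU hUc
    simp only [dif_pos (Finset.mem_insert_of_mem hfi), dif_pos (Finset.mem_insert_of_mem hfj)]
    rw [dif_pos (show fj ∈ G from Finset.mem_insert_of_mem hfj),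
      dif_pos (show fi ∈ G from Finset.mem_insert_of_mem hfi)]
    have hcomm : IsCofiltered.infTo G H (Finset.mem_insert_of_mem hfi) ≫ f =
        IsCofiltered.infTo G H (Finset.mem_insert_of_mem hfj) := by
      apply IsCofiltered.infTo_commutes
      exact Finset.mem_image_of_mem ι hf
    rw [← hcomm, F.map_comp]
    have := phi_map (g := (F.map f : F.obj fi → F.obj fj))
      (F.map f).hom.continuous (hqc f) ((F.map (IsCofiltered.infTo G H
        (Finset.mem_insert_of_mem hfi))) z) hU hUc
    rw [CategoryTheory.comp_apply]
    exact this

instance : Nonempty (FD J) := ⟨⟨∅, ∅⟩⟩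

lemma bigT_inter_nonempty
    (hspec : ∀ j : J, IsSpectralTop (F.obj j))
    (hne : ∀ j : J, Nonempty (F.obj j))
    (hqc : ∀ {i j : J} (f : i ⟶ j), IsQuasiCompactMap (F.map f))
    (k : J) (Ehat : Set (Set (F.obj k) → Bool)) (hEclosed : IsClosed Ehat)
    (E : Set (F.obj k))
    (hEiff : ∀ x : F.obj k, x ∈ E ↔ phi x ∈ Ehat)
    (hstage : ∀ (j : J) (f : j ⟶ k), ((F.map f) ⁻¹' E).Nonempty) :
    (bigT F ∩ {b : BigP F | b k ∈ Ehat}).Nonempty := by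
  classical
  obtain ⟨b, hb⟩ := IsCompact.nonempty_iInter_of_directed_nonempty_isCompact_isClosed
    (patchSections F k Ehat) (patchSections_directed F k Ehat)
    (fun D => patchSections_nonempty F hspec hne hqc k Ehat E hEiff hstage D)
    (fun D => (patchSections_closed F k Ehat hEclosed D).isCompact)
    (fun D => patchSections_closed F k Ehat hEclosed D)
  rw [Set.mem_iInter] at hb
  refine ⟨b, ⟨(hb ⟨∅, ∅⟩).1, ?_⟩, (hb ⟨∅, ∅⟩).2.1⟩
  intro i j f U hU hUc
  have hi : i ∈ ({i, j} : Finset J) := by simp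
  have hj : j ∈ ({i, j} : Finset J) := by simp
  have := (hb ⟨{i, j}, {⟨i, j, hi, hj, f⟩}⟩).2.2 ⟨i, j, hi, hj, f⟩
    (Finset.mem_singleton_self _) U hU hUc
  exact this

/-- choose a point of `X j` realizing a member of the patch set -/
noncomputable def pickx (hspec : ∀ j : J, IsSpectralTop (F.obj j)) {j : J}
    (p : Set (F.obj j) → Bool) (hp : p ∈ patchSet (F.obj j)) : F.obj j :=
  haveI : CompactSpace (F.obj j) := (hspec j).1
  haveI : QuasiSober (F.obj j) := (hspec j).2.2.1
  haveI : QuasiSeparatedSpace (F.obj j) := (hspec j).2.2.2.1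
  (phi_surjective (hspec j).2.2.2.2 hp).choose

lemma phi_pickx (hspec : ∀ j : J, IsSpectralTop (F.obj j)) {j : J}
    (p : Set (F.obj j) → Bool) (hp : p ∈ patchSet (F.obj j)) :
    phi (pickx F hspec p hp) = p := by
  haveI : CompactSpace (F.obj j) := (hspec j).1
  haveI : QuasiSober (F.obj j) := (hspec j).2.2.1
  haveI : QuasiSeparatedSpace (F.obj j) := (hspec j).2.2.2.1
  exact (phi_surjective (hspec j).2.2.2.2 hp).choose_spec

lemma phi_injective' (hspec : ∀ j : J, IsSpectralTop (F.obj j)) (j : J) :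
    Function.Injective (phi (X := F.obj j)) := by
  haveI : T0Space (F.obj j) := (hspec j).2.1
  exact phi_injective (hspec j).2.2.2.2

/-- the map from the patch-limit set to the inverse limit -/
noncomputable def limgFun (hspec : ∀ j : J, IsSpectralTop (F.obj j))
    (hqc : ∀ {i j : J} (f : i ⟶ j), IsQuasiCompactMap (F.map f))
    (b : {b : BigP F // b ∈ bigT F}) : InvLimit F := by
  refine ⟨fun j => pickx F hspec (b.1 j) (b.2.1 j), ?_⟩
  intro i j f
  apply phi_injective' F hspec j
  rw [phi_pickx]
  funext U
  by_cases hU : IsOpen U ∧ IsCompact U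
  · rw [phi_map (F.map f).hom.continuous (hqc f) _ hU.1 hU.2, phi_pickx,
      b.2.2 i j f U hU.1 hU.2]
  · rw [phi_not_qc hU, (b.2.1 j).2.2.2.2 U hU]

lemma phi_limgFun (hspec : ∀ j : J, IsSpectralTop (F.obj j))
    (hqc : ∀ {i j : J} (f : i ⟶ j), IsQuasiCompactMap (F.map f))
    (b : {b : BigP F // b ∈ bigT F}) (j : J) :
    phi ((limgFun F hspec hqc b).1 j) = b.1 j :=
  phi_pickx F hspec (b.1 j) (b.2.1 j)

lemma limgFun_surjective (hspec : ∀ j : J, IsSpectralTop (F.obj j))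
    (hqc : ∀ {i j : J} (f : i ⟶ j), IsQuasiCompactMap (F.map f)) :
    Function.Surjective (limgFun F hspec hqc) := by
  intro x
  have hmem : (fun j : J => phi (x.1 j)) ∈ bigT F := by
    constructor
    · intro j
      haveI : CompactSpace (F.obj j) := (hspec j).1
      haveI : QuasiSeparatedSpace (F.obj j) := (hspec j).2.2.2.1
      exact phi_mem_patchSet _
    · intro i j f U hU hUc
      show phi (x.1 j) U = phi (x.1 i) ((F.map f) ⁻¹' U)
      rw [← x.2 f]
      exact phi_map (F.map f).hom.continuous (hqc f) _ hU hUc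
  refine ⟨⟨_, hmem⟩, ?_⟩
  apply Subtype.ext
  funext j
  apply phi_injective' F hspec j
  rw [phi_limgFun]

lemma limgFun_continuous (hspec : ∀ j : J, IsSpectralTop (F.obj j))
    (hqc : ∀ {i j : J} (f : i ⟶ j), IsQuasiCompactMap (F.map f)) :
    Continuous (limgFun F hspec hqc) := by
  apply Continuous.subtype_mk
  apply continuous_pi
  intro j
  rw [continuous_def]
  intro U hU
  have key : (fun b : {b : BigP F // b ∈ bigT F} => pickx F hspec (b.1 j) (b.2.1 j)) ⁻¹' U =
      Subtype.val ⁻¹' (⋃ V ∈ {V : Set (F.obj j) | IsOpen V ∧ IsCompact V ∧ V ⊆ U},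
        {p : BigP F | p j V = true}) := by
    ext b
    simp only [Set.mem_preimage, Set.mem_iUnion, Set.mem_setOf_eq]
    constructor
    · intro hb
      obtain ⟨V, hV, hVc, hxV, hVU⟩ := (hspec j).2.2.2.2 _ U hU hb
      refine ⟨V, ⟨hV, hVc, hVU⟩, ?_⟩
      rw [show b.1 j = phi (pickx F hspec (b.1 j) (b.2.1 j)) from
        (phi_pickx F hspec _ _).symm]
      exact (phi_qc hV hVc).mpr hxV
    · rintro ⟨V, ⟨hV, hVc, hVU⟩, hb⟩
      rw [show b.1 j = phi (pickx F hspec (b.1 j) (b.2.1 j)) from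
        (phi_pickx F hspec _ _).symm] at hb
      exact hVU ((phi_qc hV hVc).mp hb)
  rw [key]
  apply IsOpen.preimage continuous_subtype_val
  apply isOpen_biUnion
  intro V _
  show IsOpen ((fun p : BigP F => p j V) ⁻¹' {true})
  exact IsOpen.preimage ((continuous_apply V).comp (continuous_apply j))
    (isOpen_discrete ({true} : Set Bool))

/-- the key lemma: if a patch-closed constraint at stage `k` has nonempty preimage at every
stage, there is a point of the limit satisfying it -/
lemma key_lemma (hspec : ∀ j : J, IsSpectralTop (F.obj j))
    (hne : ∀ j : J, Nonempty (F.obj j))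
    (hqc : ∀ {i j : J} (f : i ⟶ j), IsQuasiCompactMap (F.map f))
    (k : J) (Ehat : Set (Set (F.obj k) → Bool)) (hEclosed : IsClosed Ehat)
    (E : Set (F.obj k))
    (hEiff : ∀ x : F.obj k, x ∈ E ↔ phi x ∈ Ehat)
    (hstage : ∀ (j : J) (f : j ⟶ k), ((F.map f) ⁻¹' E).Nonempty) :
    ∃ x : InvLimit F, x.1 k ∈ E := by
  obtain ⟨b, hb, hbk⟩ := bigT_inter_nonempty F hspec hne hqc k Ehat hEclosed E hEiff hstage
  refine ⟨limgFun F hspec hqc ⟨b, hb⟩, ?_⟩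
  rw [hEiff, phi_limgFun]
  exact hbk

lemma invLimit_compactSpace (hspec : ∀ j : J, IsSpectralTop (F.obj j))
    (hqc : ∀ {i j : J} (f : i ⟶ j), IsQuasiCompactMap (F.map f)) :
    CompactSpace (InvLimit F) := by
  haveI : CompactSpace {b : BigP F // b ∈ bigT F} :=
    isCompact_iff_compactSpace.mp (bigT_closed F).isCompact
  constructor
  rw [← Set.range_eq_univ.mpr (limgFun_surjective F hspec hqc)]
  exact isCompact_range (limgFun_continuous F hspec hqc)

lemma clopen_eq_pullback (hspec : ∀ j : J, IsSpectralTop (F.obj j))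
    (hqc : ∀ {i j : J} (f : i ⟶ j), IsQuasiCompactMap (F.map f))
    {A : Set (InvLimit F)} (hA : IsOpen A) (hAc : IsClosed A) :
    ∃ (k : J) (U : Set (F.obj k)), IsOpen U ∧ IsCompact U ∧
      A = (fun x : InvLimit F => x.1 k) ⁻¹' U := by
  classical
  haveI := invLimit_compactSpace F hspec hqc
  have hAcpt : IsCompact A := hAc.isCompact
  -- local basic neighborhoods
  have hloc : ∀ a : {x : InvLimit F // x ∈ A}, ∃ (m : J) (W : Set (F.obj m)),
      IsOpen W ∧ IsCompact W ∧ (a : InvLimit F).1 m ∈ W ∧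
        (fun x : InvLimit F => x.1 m) ⁻¹' W ⊆ A := by
    rintro ⟨a, ha⟩
    obtain ⟨O, hO, hOA⟩ := isOpen_induced_iff.mp hA
    have haO : a.1 ∈ O := by rw [← hOA] at ha; exact ha
    obtain ⟨I, u, hu, hpi⟩ := isOpen_pi_iff.mp hO a.1 haO
    let m : J := IsCofiltered.inf I ∅
    have πs : ∀ {j : J}, j ∈ I → (m ⟶ j) := fun hj => IsCofiltered.infTo I ∅ hj
    let u' : ∀ j : J, Set (F.obj m) := fun j =>
      if h : j ∈ I then (F.map (πs h)) ⁻¹' (u j) else Set.univ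
    have hOmo : IsOpen (⋂ j ∈ I, u' j) := by
      apply isOpen_biInter_finset
      intro j hj
      show IsOpen (u' j)
      rw [show u' j = (F.map (πs hj)) ⁻¹' (u j) from dif_pos hj]
      exact (hu j hj).1.preimage (F.map (πs hj)).hom.continuous
    have haOm : a.1 m ∈ ⋂ j ∈ I, u' j := by
      simp only [Set.mem_iInter]
      intro j hj
      rw [show u' j = (F.map (πs hj)) ⁻¹' (u j) from dif_pos hj, Set.mem_preimage,
        a.2 (πs hj)]
      exact (hu j hj).2
    have hsub : (fun x : InvLimit F => x.1 m) ⁻¹' (⋂ j ∈ I, u' j) ⊆ A := by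
      intro x hx
      rw [← hOA]
      show x.1 ∈ O
      apply hpi
      intro j hj
      rw [Set.mem_preimage] at hx
      simp only [Set.mem_iInter] at hx
      have := hx j hj
      rw [show u' j = (F.map (πs hj)) ⁻¹' (u j) from dif_pos hj, Set.mem_preimage,
        x.2 (πs hj)] at this
      exact this
    obtain ⟨W, hW, hWc, haW, hWOm⟩ := (hspec m).2.2.2.2 (a.1 m) _ hOmo haOm
    exact ⟨m, W, hW, hWc, haW,
      Set.Subset.trans (Set.preimage_mono hWOm) hsub⟩
  choose m W hWo hWc hmem hsub using hloc
  -- finite subcover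
  obtain ⟨t, ht⟩ := hAcpt.elim_finite_subcover
    (fun a : {x : InvLimit F // x ∈ A} => (fun x : InvLimit F => x.1 (m a)) ⁻¹' W a)
    (fun a => (hWo a).preimage ((continuous_apply (m a)).comp continuous_subtype_val))
    (fun x hx => Set.mem_iUnion.mpr ⟨⟨x, hx⟩, hmem ⟨x, hx⟩⟩)
  -- common refinement
  let n : J := IsCofiltered.inf (t.image m) ∅
  have gs : ∀ {a : {x : InvLimit F // x ∈ A}}, a ∈ t → (n ⟶ m a) :=
    fun ha => IsCofiltered.infTo (t.image m) ∅ (Finset.mem_image_of_mem m ha)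
  refine ⟨n, ⋃ b : {a : {x : InvLimit F // x ∈ A} // a ∈ t}, (F.map (gs b.2)) ⁻¹' (W b.1),
    isOpen_iUnion fun b => (hWo b.1).preimage (F.map (gs b.2)).hom.continuous,
    isCompact_iUnion fun b => hqc (gs b.2) _ (hWo b.1) (hWc b.1), ?_⟩
  apply Set.Subset.antisymm
  · intro x hx
    obtain ⟨a, ha⟩ := Set.mem_iUnion.mp (ht hx)
    obtain ⟨hat, hxa⟩ := Set.mem_iUnion.mp ha
    apply Set.mem_preimage.mpr
    apply Set.mem_iUnion.mpr
    refine ⟨⟨a, hat⟩, ?_⟩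
    rw [Set.mem_preimage, x.2 (gs hat)]
    exact hxa
  · intro x hx
    rw [Set.mem_preimage] at hx
    obtain ⟨b, hb⟩ := Set.mem_iUnion.mp hx
    apply hsub b.1
    rw [Set.mem_preimage, ← x.2 (gs b.2)]
    exact hb
end Limit

/-- Let `{X_i}` be a cofiltered inverse system of nonempty connected spectral
spaces with quasi-compact transition maps.  Then the inverse limit `X = lim X_i` is
nonempty and connected. -/
theorem stmt5 (F : J ⥤ TopCat.{u})
    (hspec : ∀ j : J, IsSpectralTop (F.obj j))
    (hne : ∀ j : J, Nonempty (F.obj j))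
    (hconn : ∀ j : J, ConnectedSpace (F.obj j))
    (hqc : ∀ {i j : J} (f : i ⟶ j), IsQuasiCompactMap (F.map f)) :
    Nonempty (InvLimit F) ∧ ConnectedSpace (InvLimit F) := by
  classical
  have hX : Nonempty (InvLimit F) := by
    obtain ⟨k⟩ := IsCofiltered.nonempty (C := J)
    obtain ⟨x, _⟩ := key_lemma F hspec hne hqc k Set.univ isClosed_univ Set.univ
      (fun x => by simp) (fun j f => ⟨(hne j).some, Set.mem_univ _⟩)
    exact ⟨x⟩
  refine ⟨hX, ?_⟩
  have hpc : PreconnectedSpace (InvLimit F) := by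
    constructor
    by_contra hnp
    unfold _root_.IsPreconnected at hnp
    push_neg at hnp
    obtain ⟨u, v, hu, hv, hcover, hune, hvne, hdisj⟩ := hnp
    have huv : u ∩ v = ∅ := by
      rw [← hdisj]; rw [Set.univ_inter]
    -- u and v are clopen
    have hvcompl : v = uᶜ := by
      apply Set.Subset.antisymm
      · intro x hxv hxu
        have : x ∈ u ∩ v := ⟨hxu, hxv⟩
        rw [huv] at this
        exact this
      · intro x hxu
        rcases hcover (Set.mem_univ x) with h | h
        · exact absurd h hxu
        · exact h
    have hucl : IsClosed u := by rw [← isOpen_compl_iff, ← hvcompl]; exact hv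
    have hvcl : IsClosed v := by rw [hvcompl]; exact hu.isClosed_compl
    -- descend to finite stages
    obtain ⟨k₁, U₁, hU₁o, hU₁c, hU₁⟩ := clopen_eq_pullback F hspec hqc hu hucl
    obtain ⟨k₂, U₂, hU₂o, hU₂c, hU₂⟩ := clopen_eq_pullback F hspec hqc hv hvcl
    obtain ⟨l, g₁, g₂, -⟩ := IsCofilteredOrEmpty.cone_objs k₁ k₂
    set U : Set (F.obj l) := (F.map g₁) ⁻¹' U₁ with hU
    set V : Set (F.obj l) := (F.map g₂) ⁻¹' U₂ with hV
    have hUo : IsOpen U := hU₁o.preimage (F.map g₁).hom.continuous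
    have hUc : IsCompact U := hqc g₁ _ hU₁o hU₁c
    have hVo : IsOpen V := hU₂o.preimage (F.map g₂).hom.continuous
    have hVc : IsCompact V := hqc g₂ _ hU₂o hU₂c
    have hu' : u = (fun x : InvLimit F => x.1 l) ⁻¹' U := by
      rw [hU₁]
      ext x
      simp only [Set.mem_preimage, hU]
      rw [x.2 g₁]
    have hv' : v = (fun x : InvLimit F => x.1 l) ⁻¹' V := by
      rw [hU₂]
      ext x
      simp only [Set.mem_preimage, hV]
      rw [x.2 g₂]
    -- the patch-closed constraint
    set E : Set (F.obj l) := (U ∩ V) ∪ (U ∪ V)ᶜ with hE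
    set Ehat : Set (Set (F.obj l) → Bool) :=
      {p | ((p U && p V) || (!p U && !p V)) = true} with hEhat
    have hEclosed : IsClosed Ehat := by
      have hc : Continuous (fun p : Set (F.obj l) → Bool =>
          ((p U && p V) || (!p U && !p V))) := by
        have h : Continuous (fun p : Set (F.obj l) → Bool => (p U, p V)) :=
          (continuous_apply U).prodMk (continuous_apply V)
        exact (continuous_of_discreteTopology
          (f := fun q : Bool × Bool => ((q.1 && q.2) || (!q.1 && !q.2)))).comp h
      exact isClosed_eq hc continuous_const
    have hEiff : ∀ x : F.obj l, x ∈ E ↔ phi x ∈ Ehat := by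
      intro x
      have hmemEhat : phi x ∈ Ehat ↔ ((x ∈ U ∧ x ∈ V) ∨ (¬ x ∈ U ∧ ¬ x ∈ V)) := by
        simp only [hEhat, Set.mem_setOf_eq, Bool.or_eq_true, Bool.and_eq_true,
          Bool.not_eq_true', Bool.eq_false_iff, Ne, phi_qc hUo hUc, phi_qc hVo hVc]
      have hmemE : x ∈ E ↔ ((x ∈ U ∧ x ∈ V) ∨ (¬ x ∈ U ∧ ¬ x ∈ V)) := by
        simp only [hE, Set.mem_union, Set.mem_inter_iff, Set.mem_compl_iff]
        tauto
      rw [hmemE, hmemEhat]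
    have hstage : ∀ (j : J) (f : j ⟶ l), ((F.map f) ⁻¹' E).Nonempty := by
      intro j f
      by_contra hemp
      rw [Set.not_nonempty_iff_eq_empty] at hemp
      have hdisj' : (F.map f) ⁻¹' U ∩ (F.map f) ⁻¹' V = ∅ := by
        apply Set.eq_empty_of_subset_empty
        rw [← hemp, ← Set.preimage_inter]
        exact Set.preimage_mono Set.subset_union_left
      have hcov' : (F.map f) ⁻¹' U ∪ (F.map f) ⁻¹' V = Set.univ := by
        apply Set.eq_univ_of_forall
        intro y
        rw [← Set.preimage_union]
        by_contra hy
        have : (F.map f) y ∈ (U ∪ V)ᶜ := hy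
        have : y ∈ (F.map f) ⁻¹' E := Set.mem_preimage.mpr (Or.inr this)
        rw [hemp] at this
        exact this
      -- nonemptiness of the two pieces at stage j
      obtain ⟨a, -, hau⟩ := hune
      obtain ⟨c, -, hcv⟩ := hvne
      have haj : a.1 j ∈ (F.map f) ⁻¹' U := by
        rw [Set.mem_preimage, a.2 f]
        rw [hu'] at hau
        exact hau
      have hcj : c.1 j ∈ (F.map f) ⁻¹' V := by
        rw [Set.mem_preimage, c.2 f]
        rw [hv'] at hcv
        exact hcv
      -- f ⁻¹' U is clopen in the connected space X_j
      have hclopen : IsClopen ((F.map f) ⁻¹' U) := by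
        constructor
        · rw [← isOpen_compl_iff]
          have : ((F.map f) ⁻¹' U)ᶜ = (F.map f) ⁻¹' V := by
            apply Set.Subset.antisymm
            · intro y hy
              rcases (hcov' ▸ Set.mem_univ y : y ∈ _ ∪ _) with h | h
              · exact absurd h hy
              · exact h
            · intro y hy hyU
              have : y ∈ ((F.map f) ⁻¹' U ∩ (F.map f) ⁻¹' V) := ⟨hyU, hy⟩
              rw [hdisj'] at this
              exact this
          rw [this]
          exact hVo.preimage (F.map f).hom.continuous
        · exact hUo.preimage (F.map f).hom.continuous
      haveI := hconn j
      rcases isClopen_iff.mp hclopen with h | h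
      · rw [h] at haj; exact haj
      · have : c.1 j ∈ (F.map f) ⁻¹' U := by rw [h]; exact Set.mem_univ _
        have hint : c.1 j ∈ ((F.map f) ⁻¹' U ∩ (F.map f) ⁻¹' V) := ⟨this, hcj⟩
        rw [hdisj'] at hint
        exact hint
    obtain ⟨x, hxE⟩ := key_lemma F hspec hne hqc l Ehat hEclosed E hEiff hstage
    rcases hxE with ⟨h1, h2⟩ | h
    · have hxu : x ∈ u := by rw [hu']; exact h1
      have hxv : x ∈ v := by rw [hv']; exact h2
      have : x ∈ u ∩ v := ⟨hxu, hxv⟩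
      rw [huv] at this
      exact this
    · rcases hcover (Set.mem_univ x) with hxu | hxv
      · exact h (Or.inl (by rw [hu'] at hxu; exact hxu))
      · exact h (Or.inr (by rw [hv'] at hxv; exact hxv))
  exact @ConnectedSpace.mk _ _ hpc hX
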